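/- Let V₀, V₁, V₂, V₃, T be real vector spaces, let d₀ : V₀ → V₁, d₁ : V₁ → V₂, d₂ : V₂ → V₃, G : V₂ → T be linear maps with d₁ ∘ d₀ = 0 and d₂ ∘ d₁ = 0, let c be a nonzero real number, and set L := c • (G ∘ d₁) : V₁ → T. Then range(d₀) ⊆ ker d₁ ⊆ ker L, and the sequence 0 → ker d₁ ⧸ range d₀ → ker L ⧸ range d₀ → (ker G ⊓ ker d₂) → ker d₂ ⧸ range d₁ is exact, where the first map is induced by the inclusion ker d₁ ⊆ ker L, the second sends the class of u to d₁ u (which indeed lies in ker G ⊓ ker d₂), and the third sends w to its class modulo range d₁. Here exactness means: the first map is injective, the kernel of the second map equals the range of the first, and the kernel of the third map equals the range of the second. -/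

import Mathlib

/-- Algebraic content of Proposition 2.5 of Branson–Gover: the canonical exact
sequence `0 → H^{k-1}(M) → H^{k-1}_L(M) → ℋ^k → H^k(M)`, where
`L = c • (G ∘ d₁)` encodes `(n−2k+4) G_k ∘ d = L_{k-1}`. -/
theorem stmt_3
    {V₀ V₁ V₂ V₃ T : Type*}
    [AddCommGroup V₀] [Module ℝ V₀] [AddCommGroup V₁] [Module ℝ V₁]
    [AddCommGroup V₂] [Module ℝ V₂] [AddCommGroup V₃] [Module ℝ V₃]
    [AddCommGroup T] [Module ℝ T]
    (d₀ : V₀ →ₗ[ℝ] V₁) (d₁ : V₁ →ₗ[ℝ] V₂) (d₂ : V₂ →ₗ[ℝ] V₃)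
    (G : V₂ →ₗ[ℝ] T)
    (h₁₀ : d₁ ∘ₗ d₀ = 0) (h₂₁ : d₂ ∘ₗ d₁ = 0)
    (c : ℝ) (hc : c ≠ 0)
    (L : V₁ →ₗ[ℝ] T) (hL : L = c • (G ∘ₗ d₁)) :
    ∃ (_ : LinearMap.range d₀ ≤ LinearMap.ker d₁)
      (hkk : LinearMap.ker d₁ ≤ LinearMap.ker L)
      (_ : ∀ u ∈ LinearMap.ker L, d₁ u ∈ LinearMap.ker G ⊓ LinearMap.ker d₂)
      (i : (↥(LinearMap.ker d₁) ⧸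
              (LinearMap.range d₀).comap (LinearMap.ker d₁).subtype) →ₗ[ℝ]
           (↥(LinearMap.ker L) ⧸
              (LinearMap.range d₀).comap (LinearMap.ker L).subtype))
      (j : (↥(LinearMap.ker L) ⧸
              (LinearMap.range d₀).comap (LinearMap.ker L).subtype) →ₗ[ℝ]
           ↥(LinearMap.ker G ⊓ LinearMap.ker d₂))
      (k : ↥(LinearMap.ker G ⊓ LinearMap.ker d₂) →ₗ[ℝ]
           (↥(LinearMap.ker d₂) ⧸
              (LinearMap.range d₁).comap (LinearMap.ker d₂).subtype)),
      (∀ (u : V₁) (hu : u ∈ LinearMap.ker d₁),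
          i (Submodule.Quotient.mk ⟨u, hu⟩) = Submodule.Quotient.mk ⟨u, hkk hu⟩) ∧
      (∀ (u : V₁) (hu : u ∈ LinearMap.ker L),
          (j (Submodule.Quotient.mk ⟨u, hu⟩) : V₂) = d₁ u) ∧
      (∀ w : ↥(LinearMap.ker G ⊓ LinearMap.ker d₂),
          k w = Submodule.Quotient.mk ⟨(w : V₂), (Submodule.mem_inf.mp w.2).2⟩) ∧
      Function.Injective i ∧
      LinearMap.ker j = LinearMap.range i ∧
      LinearMap.ker k = LinearMap.range j := by
  -- basic inclusions
  have hrk : LinearMap.range d₀ ≤ LinearMap.ker d₁ := by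
    rintro x ⟨y, rfl⟩
    simpa [LinearMap.mem_ker] using congrFun (congrArg DFunLike.coe h₁₀) y
  have hkk : LinearMap.ker d₁ ≤ LinearMap.ker L := by
    intro u hu
    simp [hL, LinearMap.mem_ker.mp hu, LinearMap.mem_ker]
  have hGd : ∀ u ∈ LinearMap.ker L, d₁ u ∈ LinearMap.ker G ⊓ LinearMap.ker d₂ := by
    intro u hu
    refine Submodule.mem_inf.mpr ⟨?_, ?_⟩
    · have : c • G (d₁ u) = 0 := by simpa [hL] using LinearMap.mem_ker.mp hu
      simpa [LinearMap.mem_ker] using (smul_eq_zero.mp this).resolve_left hc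
    · simpa [LinearMap.mem_ker] using congrFun (congrArg DFunLike.coe h₂₁) u
  set N₁ := (LinearMap.range d₀).comap (LinearMap.ker d₁).subtype
  set N₂ := (LinearMap.range d₀).comap (LinearMap.ker L).subtype
  set N₃ := (LinearMap.range d₁).comap (LinearMap.ker d₂).subtype
  -- the inclusion map
  set f : ↥(LinearMap.ker d₁) →ₗ[ℝ] ↥(LinearMap.ker L) := Submodule.inclusion hkk with hf
  have hfN : N₁ ≤ N₂.comap f := fun x hx => hx
  set i := Submodule.mapQ N₁ N₂ f hfN with hi
  have hi' : ∀ (u : V₁) (hu : u ∈ LinearMap.ker d₁),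
      i (Submodule.Quotient.mk ⟨u, hu⟩) = Submodule.Quotient.mk ⟨u, hkk hu⟩ := by
    intro u hu; rfl
  -- j
  set g : ↥(LinearMap.ker L) →ₗ[ℝ] ↥(LinearMap.ker G ⊓ LinearMap.ker d₂) :=
    LinearMap.codRestrict _ (d₁ ∘ₗ (LinearMap.ker L).subtype)
      (fun x => hGd x x.2) with hg
  have hgN : N₂ ≤ LinearMap.ker g := by
    rintro ⟨x, hx⟩ ⟨y, hy⟩
    have : d₁ x = 0 := by
      have := hrk ⟨y, hy⟩; simpa [LinearMap.mem_ker] using this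
    ext
    exact this
  set j := Submodule.liftQ N₂ g hgN with hj
  have hj' : ∀ (u : V₁) (hu : u ∈ LinearMap.ker L),
      (j (Submodule.Quotient.mk ⟨u, hu⟩) : V₂) = d₁ u := by
    intro u hu; rfl
  -- k
  set k : ↥(LinearMap.ker G ⊓ LinearMap.ker d₂) →ₗ[ℝ]
      (↥(LinearMap.ker d₂) ⧸ N₃) :=
    N₃.mkQ ∘ₗ Submodule.inclusion inf_le_right with hk
  have hk' : ∀ w : ↥(LinearMap.ker G ⊓ LinearMap.ker d₂),
      k w = Submodule.Quotient.mk ⟨(w : V₂), (Submodule.mem_inf.mp w.2).2⟩ := by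
    intro w; rfl
  refine ⟨hrk, hkk, hGd, i, j, k, hi', hj', hk', ?_, ?_, ?_⟩
  · -- injectivity of i
    rw [← LinearMap.ker_eq_bot, eq_bot_iff]
    intro m hm
    obtain ⟨⟨u, hu⟩, rfl⟩ := Submodule.Quotient.mk_surjective _ m
    rw [LinearMap.mem_ker, hi' u hu] at hm
    have h2 : (⟨u, hkk hu⟩ : ↥(LinearMap.ker L)) ∈ N₂ :=
      (Submodule.Quotient.mk_eq_zero _).mp hm
    exact (Submodule.mem_bot _).mpr ((Submodule.Quotient.mk_eq_zero _).mpr h2)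
  · -- ker j = range i
    ext m
    constructor
    · intro hm
      obtain ⟨⟨u, hu⟩, rfl⟩ := Submodule.Quotient.mk_surjective _ m
      have hd : d₁ u = 0 := by
        have h1 := hj' u hu
        rw [LinearMap.mem_ker.mp hm] at h1
        simpa using h1.symm
      exact ⟨Submodule.Quotient.mk ⟨u, hd⟩, hi' u hd⟩
    · rintro ⟨m', rfl⟩
      obtain ⟨⟨v, hv⟩, rfl⟩ := Submodule.Quotient.mk_surjective _ m'
      rw [LinearMap.mem_ker]
      ext
      rw [hi' v hv, hj' v (hkk hv)]
      simpa using LinearMap.mem_ker.mp hv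
  · -- ker k = range j
    ext w
    constructor
    · intro hw
      have hmem : (⟨(w : V₂), (Submodule.mem_inf.mp w.2).2⟩ : ↥(LinearMap.ker d₂)) ∈ N₃ := by
        have h1 := LinearMap.mem_ker.mp hw
        rw [hk' w] at h1
        exact (Submodule.Quotient.mk_eq_zero _).mp h1
      obtain ⟨u, hu⟩ := hmem
      have hdw : d₁ u = (w : V₂) := hu
      have huL : u ∈ LinearMap.ker L := by
        have hGw : G (w : V₂) = 0 := (Submodule.mem_inf.mp w.2).1
        simp [hL, LinearMap.mem_ker, hdw, hGw]
      refine ⟨Submodule.Quotient.mk ⟨u, huL⟩, ?_⟩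
      ext
      rw [hj' u huL]
      exact hdw
    · rintro ⟨m, rfl⟩
      obtain ⟨⟨u, hu⟩, rfl⟩ := Submodule.Quotient.mk_surjective _ m
      rw [LinearMap.mem_ker, hk' _, Submodule.Quotient.mk_eq_zero]
      exact ⟨u, (hj' u hu).symm⟩
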